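/- In the braid group B_3, no σ_1-positive word (a word in σ_1, σ_2^{±1} containing at least one σ_1 and no σ_1^{-1}) represents the identity element. -/

import Mathlib

/-- The braid relations on `m` generators `σ_0, …, σ_{m-1}` (0-based indexing). -/
def braidRels (m : ℕ) : Set (FreeGroup (Fin m)) :=
  {r | (∃ i j : Fin m, (i : ℕ) + 1 = (j : ℕ) ∧
          r = FreeGroup.of i * FreeGroup.of j * FreeGroup.of i *
              (FreeGroup.of j * FreeGroup.of i * FreeGroup.of j)⁻¹) ∨
       (∃ i j : Fin m, (i : ℕ) + 2 ≤ (j : ℕ) ∧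
          r = FreeGroup.of i * FreeGroup.of j * (FreeGroup.of i * FreeGroup.of j)⁻¹)}

/-- The braid group `B_n`, with Artin generators indexed (0-based) by `Fin (n-1)`. -/
abbrev BraidGroup (n : ℕ) := PresentedGroup (braidRels (n - 1))

/-- The Artin generator `σ_{i+1}` in 1-based notation, i.e. the `i`-th generator 0-based;
returns `1` for out-of-range indices. -/
def braidGen (n i : ℕ) : BraidGroup n :=
  if h : i < n - 1 then PresentedGroup.of ⟨i, h⟩ else 1

/-- Evaluation of a word: a letter `(i, true)` is `σ_i` (0-based) and `(i, false)` is `σ_i⁻¹`. -/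
def evalWord (n : ℕ) (w : List (ℕ × Bool)) : BraidGroup n :=
  (w.map fun p => if p.2 then braidGen n p.1 else (braidGen n p.1)⁻¹).prod

/-- `k`-fold concatenation (power) of a word. -/
def wpow (u : List (ℕ × Bool)) (k : ℕ) : List (ℕ × Bool) :=
  (List.replicate k u).flatten

/-- The semicircular word `σ_i^ε σ_{i±1}^ε ⋯ σ_j^ε` (0-based indices, `true` = positive sign). -/
def semiWord (i j : ℕ) (ε : Bool) : List (ℕ × Bool) :=
  if i ≤ j then (List.range (j - i + 1)).map fun t => (i + t, ε)
  else (List.range (i - j + 1)).map fun t => (i - t, ε)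

/-- The semicircular move as an element of the braid group. -/
def semiMove (n i j : ℕ) (ε : Bool) : BraidGroup n := evalWord n (semiWord i j ε)

/-- Letter `σ_1` of `B_3` (0-based index 0). -/
def A : ℕ × Bool := (0, true)
/-- Letter `σ_1⁻¹`. -/
def A' : ℕ × Bool := (0, false)
/-- Letter `σ_2`. -/
def B : ℕ × Bool := (1, true)
/-- Letter `σ_2⁻¹`. -/
def B' : ℕ × Bool := (1, false)

/-- A word in the letters `σ_1^{±1}, σ_2^{±1}` of `B_3`. -/
def ValidWord3 (w : List (ℕ × Bool)) : Prop := ∀ l ∈ w, l.1 < 2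

/-- A word is geodesic if no strictly shorter word in the generators `σ_1^{±1}, σ_2^{±1}`
represents the same element of `B_3`. -/
def Geodesic3 (w : List (ℕ × Bool)) : Prop :=
  ∀ w', ValidWord3 w' → evalWord 3 w' = evalWord 3 w → w.length ≤ w'.length

/- ### Auxiliary development: the lifted projective-line action of `B_3`.

`B_3` maps to (lifts of) Möbius transformations: `σ₁ ↦ x ↦ x + 1`, `σ₂ ↦ x ↦ x/(1-x)`.
We realize the universal cover of the circle `ℝ ∪ {∞}` as `ℤ × Option ℝ`
(sheet index × point of the circle, `none` being the point at infinity, which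
sits at the bottom of its sheet).  The basepoint `c = (0, some 0)` is fixed by
`σ₂^{±1}` and moved strictly up by `σ₁`, and the set of points strictly above
`c` is preserved by `σ₁, σ₂, σ₂⁻¹`: hence a `σ₁`-positive word moves `c`. -/

/-- Points of the lifted projective line. -/
abbrev LLpt := ℤ × Option ℝ

/-- Lift of `x ↦ x + 1` (image of `σ₁`); it fixes every lift of `∞`. -/
def Ffun : LLpt → LLpt
  | (k, none) => (k, none)
  | (k, some x) => (k, some (x + 1))

/-- Inverse of `Ffun`. -/
def Ffuninv : LLpt → LLpt
  | (k, none) => (k, none)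
  | (k, some x) => (k, some (x - 1))

/-- Lift of `x ↦ x / (1 - x)` (image of `σ₂`); it fixes every lift of `0`,
and crosses `∞` exactly when passing the point `1`. -/
noncomputable def Gfun : LLpt → LLpt
  | (k, none) => (k, some (-1))
  | (k, some x) =>
      if x < 1 then (k, some (x / (1 - x)))
      else if x = 1 then (k + 1, none)
      else (k + 1, some (x / (1 - x)))

/-- Inverse of `Gfun` (lift of `y ↦ y / (1 + y)`). -/
noncomputable def Gfuninv : LLpt → LLpt
  | (k, none) => (k - 1, some 1)
  | (k, some y) =>
      if -1 < y then (k, some (y / (1 + y)))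
      else if y = -1 then (k, none)
      else (k - 1, some (y / (1 + y)))

lemma Gfun_lt {x : ℝ} (k : ℤ) (h : x < 1) :
    Gfun (k, some x) = (k, some (x / (1 - x))) := by
  simp [Gfun, h]

lemma Gfun_one (k : ℤ) : Gfun (k, some 1) = (k + 1, none) := by
  simp [Gfun]

lemma Gfun_gt {x : ℝ} (k : ℤ) (h : 1 < x) :
    Gfun (k, some x) = (k + 1, some (x / (1 - x))) := by
  have h1 : ¬ x < 1 := not_lt.2 h.le
  have h2 : x ≠ 1 := h.ne'
  simp [Gfun, h1, h2]

lemma Gfuninv_gt {y : ℝ} (k : ℤ) (h : -1 < y) :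
    Gfuninv (k, some y) = (k, some (y / (1 + y))) := by
  simp [Gfuninv, h]

lemma Gfuninv_neg_one (k : ℤ) : Gfuninv (k, some (-1)) = (k, none) := by
  simp [Gfuninv]

lemma Gfuninv_lt {y : ℝ} (k : ℤ) (h : y < -1) :
    Gfuninv (k, some y) = (k - 1, some (y / (1 + y))) := by
  have h1 : ¬ (-1 : ℝ) < y := not_lt.2 h.le
  have h2 : y ≠ -1 := h.ne
  simp [Gfuninv, h1, h2]

lemma div_cancel_aux {x : ℝ} (h : (1:ℝ) - x ≠ 0) : x / (1 - x) / (1 / (1 - x)) = x := by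
  field_simp

lemma Gfuninv_Gfun (p : LLpt) : Gfuninv (Gfun p) = p := by
  obtain ⟨k, _ | x⟩ := p
  · show Gfuninv (k, some (-1)) = (k, none)
    exact Gfuninv_neg_one k
  · rcases lt_trichotomy x 1 with h | h | h
    · rw [Gfun_lt k h]
      have h0 : (0:ℝ) < 1 - x := by linarith
      have key : 1 + x / (1 - x) = 1 / (1 - x) := by field_simp; ring
      have h1 : -1 < x / (1 - x) := by
        have : (0:ℝ) < 1 / (1 - x) := by positivity
        linarith
      rw [Gfuninv_gt k h1, key, div_cancel_aux h0.ne']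
    · rw [h, Gfun_one]
      show Gfuninv (k + 1, none) = (k, some 1)
      show ((k + 1 - 1 : ℤ), some (1:ℝ)) = (k, some 1)
      norm_num
    · rw [Gfun_gt k h]
      have h0 : 1 - x < (0:ℝ) := by linarith
      have key : 1 + x / (1 - x) = 1 / (1 - x) := by field_simp [h0.ne]; ring
      have h1 : x / (1 - x) < -1 := by
        have : 1 / (1 - x) < (0:ℝ) := div_neg_of_pos_of_neg one_pos h0
        linarith
      rw [Gfuninv_lt (k + 1) h1, key, div_cancel_aux h0.ne]
      norm_num

lemma div_cancel_aux' {y : ℝ} (h : (1:ℝ) + y ≠ 0) : y / (1 + y) / (1 / (1 + y)) = y := by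
  field_simp

lemma Gfun_Gfuninv (p : LLpt) : Gfun (Gfuninv p) = p := by
  obtain ⟨k, _ | y⟩ := p
  · show Gfun (k - 1, some 1) = (k, none)
    rw [Gfun_one]
    norm_num
  · rcases lt_trichotomy y (-1) with h | h | h
    · rw [Gfuninv_lt k h]
      have h0 : 1 + y < (0:ℝ) := by linarith
      have key : 1 - y / (1 + y) = 1 / (1 + y) := by field_simp [h0.ne]; ring
      have h1 : 1 < y / (1 + y) := by
        have : 1 / (1 + y) < (0:ℝ) := div_neg_of_pos_of_neg one_pos h0
        linarith
      rw [Gfun_gt (k - 1) h1, key, div_cancel_aux' h0.ne]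
      norm_num
    · rw [h, Gfuninv_neg_one]
      show (k, some (-1:ℝ)) = (k, some (-1))
      rfl
    · rw [Gfuninv_gt k h]
      have h0 : (0:ℝ) < 1 + y := by linarith
      have key : 1 - y / (1 + y) = 1 / (1 + y) := by field_simp [h0.ne']; ring
      have h1 : y / (1 + y) < 1 := by
        have : (0:ℝ) < 1 / (1 + y) := by positivity
        linarith
      rw [Gfun_lt k h1, key, div_cancel_aux' h0.ne']

/-- `σ₁` as a permutation of the lifted line. -/
def Fperm : Equiv.Perm LLpt :=
  ⟨Ffun, Ffuninv, by rintro ⟨k, _ | x⟩ <;> simp [Ffun, Ffuninv],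
    by rintro ⟨k, _ | x⟩ <;> simp [Ffun, Ffuninv]⟩

/-- `σ₂` as a permutation of the lifted line. -/
noncomputable def Gperm : Equiv.Perm LLpt :=
  ⟨Gfun, Gfuninv, Gfuninv_Gfun, Gfun_Gfuninv⟩

lemma Ffun_some (k : ℤ) (x : ℝ) : Ffun (k, some x) = (k, some (x + 1)) := rfl

/-- The braid relation, pointwise. -/
lemma braid_pointwise (p : LLpt) : Ffun (Gfun (Ffun p)) = Gfun (Ffun (Gfun p)) := by
  obtain ⟨k, _ | x⟩ := p
  · show Ffun (Gfun (k, none)) = Gfun (Ffun (k, some (-1)))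
    rw [show Gfun (k, none) = (k, some (-1)) from rfl, Ffun_some,
      Gfun_lt k (by norm_num : (-1:ℝ) + 1 < 1)]
    norm_num
  · rcases lt_trichotomy x 0 with h | h | h
    · -- x < 0
      have hx1 : x < 1 := by linarith
      have h0 : (0:ℝ) < 1 - x := by linarith
      rw [Ffun_some, Gfun_lt k (by linarith : x + 1 < 1), Ffun_some,
        Gfun_lt k hx1, Ffun_some]
      have key : x / (1 - x) + 1 = 1 / (1 - x) := by field_simp; ring
      have hlt : 1 / (1 - x) < 1 := by rw [div_lt_one h0]; linarith
      rw [key, Gfun_lt k hlt]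
      simp only [Prod.mk.injEq, Option.some.injEq, true_and]
      have hne : 1 - (x + 1) ≠ 0 := by intro hh; apply h.ne; linarith
      have hne2 : 1 - 1 / (1 - x) ≠ 0 := by
        rw [sub_ne_zero]
        intro hh
        rw [eq_comm, div_eq_one_iff_eq h0.ne'] at hh
        exact h.ne (by linarith)
      have hx : x ≠ 0 := h.ne
      field_simp [hx]
      ring
    · -- x = 0
      subst h
      rw [Ffun_some, show (0:ℝ) + 1 = 1 from by norm_num, Gfun_one,
        show Ffun (k + 1, none) = (k + 1, none) from rfl,
        Gfun_lt k (by norm_num : (0:ℝ) < 1)]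
      norm_num [Ffun_some, Gfun_one]
    · -- 0 < x
      rcases lt_trichotomy x 1 with h1 | h1 | h1
      · -- 0 < x < 1
        have h0 : (0:ℝ) < 1 - x := by linarith
        rw [Ffun_some, Gfun_gt k (by linarith : 1 < x + 1), Ffun_some,
          Gfun_lt k h1, Ffun_some]
        have key : x / (1 - x) + 1 = 1 / (1 - x) := by field_simp; ring
        have hgt : 1 < 1 / (1 - x) := by rw [lt_div_iff₀ h0]; linarith
        rw [key, Gfun_gt k hgt]
        simp only [Prod.mk.injEq, Option.some.injEq, true_and]
        have hne : 1 - (x + 1) ≠ 0 := by intro hh; apply h.ne'; linarith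
        have hne2 : 1 - 1 / (1 - x) ≠ 0 := by
          rw [sub_ne_zero]
          intro hh
          rw [eq_comm, div_eq_one_iff_eq h0.ne'] at hh
          exact h.ne' (by linarith)
        have hx : x ≠ 0 := h.ne'
        field_simp [hx]
        ring
      · -- x = 1
        subst h1
        rw [Ffun_some, Gfun_gt k (by norm_num : (1:ℝ) < 1 + 1), Ffun_some, Gfun_one,
          show Ffun (k + 1, none) = (k + 1, none) from rfl,
          show Gfun (k + 1, none) = (k + 1, some (-1)) from rfl]
        norm_num
      · -- 1 < x
        have h0 : 1 - x < (0:ℝ) := by linarith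
        rw [Ffun_some, Gfun_gt k (by linarith : 1 < x + 1), Ffun_some,
          Gfun_gt k h1, Ffun_some]
        have key : x / (1 - x) + 1 = 1 / (1 - x) := by field_simp [h0.ne]; ring
        have hlt : 1 / (1 - x) < 1 := by
          have : 1 / (1 - x) < 0 := div_neg_of_pos_of_neg one_pos h0
          linarith
        rw [key, Gfun_lt (k + 1) hlt]
        simp only [Prod.mk.injEq, Option.some.injEq, true_and]
        have hne : 1 - (x + 1) ≠ 0 := by intro hh; apply h.ne'; linarith
        have hne2 : 1 - 1 / (1 - x) ≠ 0 := by
          rw [sub_ne_zero]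
          intro hh
          rw [eq_comm, div_eq_one_iff_eq h0.ne] at hh
          exact h.ne' (by linarith)
        have hx : x ≠ 0 := h.ne'
        field_simp [hx, h0.ne]
        ring

/-- The braid relation for the permutations. -/
lemma braid_perm : Fperm * Gperm * Fperm = Gperm * Fperm * Gperm :=
  Equiv.ext fun p => by
    simp only [Equiv.Perm.mul_apply]
    exact braid_pointwise p

/-- The images of the two generators of `B_3`. -/
noncomputable def genPerm : Fin 2 → Equiv.Perm LLpt := ![Fperm, Gperm]

lemma rels_check : ∀ r ∈ braidRels 2, FreeGroup.lift genPerm r = 1 := by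
  rintro r (⟨i, j, hij, rfl⟩ | ⟨i, j, hij, rfl⟩)
  · have hi : i = 0 := by omega
    have hj : j = 1 := by omega
    subst hi; subst hj
    simp only [map_mul, map_inv, FreeGroup.lift_apply_of, genPerm,
      Matrix.cons_val_zero, Matrix.cons_val_one, Matrix.head_cons]
    rw [mul_inv_eq_one]
    exact braid_perm
  · exfalso
    omega

/-- The action of `B_3` on the lifted projective line. -/
noncomputable def braidAct : BraidGroup 3 →* Equiv.Perm LLpt :=
  PresentedGroup.toGroup rels_check

lemma braidAct_gen0 : braidAct (braidGen 3 0) = Fperm := by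
  rw [braidGen, dif_pos (by norm_num : (0:ℕ) < 3 - 1)]
  exact PresentedGroup.toGroup.of rels_check

lemma braidAct_gen1 : braidAct (braidGen 3 1) = Gperm := by
  rw [braidGen, dif_pos (by norm_num : (1:ℕ) < 3 - 1)]
  exact PresentedGroup.toGroup.of rels_check

/-- The set of points strictly above the basepoint. -/
def SUp : LLpt → Prop := fun p => 0 < p.1 ∨ (p.1 = 0 ∧ ∃ x : ℝ, p.2 = some x ∧ 0 < x)

/-- The basepoint: the lift of `0` on sheet `0`. -/
def basept : LLpt := (0, some 0)

lemma SUp_F {p : LLpt} (hp : SUp p) : SUp (Ffun p) := by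
  obtain ⟨k, _ | x⟩ := p
  · exact hp
  · rcases hp with hk | ⟨hk, x', hx', hpos⟩
    · exact Or.inl hk
    · refine Or.inr ⟨hk, x + 1, rfl, ?_⟩
      cases hx'
      linarith

lemma SUp_G {p : LLpt} (hp : SUp p) : SUp (Gfun p) := by
  obtain ⟨k, _ | x⟩ := p
  · rcases hp with hk | ⟨_, x', hx', _⟩
    · exact Or.inl hk
    · exact absurd hx' (by simp)
  · rcases hp with hk | ⟨hk, x', hx', hpos⟩
    · show SUp (if x < 1 then (k, some (x / (1 - x)))
        else if x = 1 then (k + 1, none) else (k + 1, some (x / (1 - x))))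
      split_ifs <;> exact Or.inl (by omega)
    · cases hx'
      obtain rfl : k = 0 := hk
      rcases lt_trichotomy x 1 with h1 | h1 | h1
      · rw [Gfun_lt _ h1]
        exact Or.inr ⟨rfl, _, rfl, div_pos hpos (by linarith)⟩
      · rw [h1, Gfun_one]
        exact Or.inl one_pos
      · rw [Gfun_gt _ h1]
        exact Or.inl one_pos

lemma SUp_Ginv {p : LLpt} (hp : SUp p) : SUp (Gfuninv p) := by
  obtain ⟨k, _ | y⟩ := p
  · rcases hp with hk | ⟨_, x', hx', _⟩
    · show SUp (k - 1, some 1)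
      rcases lt_or_ge 1 k with hk1 | hk1
      · exact Or.inl (by omega)
      · exact Or.inr ⟨by omega, 1, rfl, one_pos⟩
    · exact absurd hx' (by simp)
  · rcases hp with hk | ⟨hk, x', hx', hpos⟩
    · rcases lt_trichotomy y (-1) with h1 | h1 | h1
      · rw [Gfuninv_lt _ h1]
        rcases lt_or_ge 1 k with hk1 | hk1
        · exact Or.inl (by omega)
        · refine Or.inr ⟨by omega, _, rfl, ?_⟩
          exact div_pos_of_neg_of_neg (by linarith) (by linarith)
      · rw [h1, Gfuninv_neg_one]
        exact Or.inl hk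
      · rw [Gfuninv_gt _ h1]
        exact Or.inl hk
    · cases hx'
      obtain rfl : k = 0 := hk
      rw [Gfuninv_gt _ (by linarith : (-1:ℝ) < y)]
      exact Or.inr ⟨rfl, _, rfl, div_pos hpos (by linarith)⟩

lemma not_SUp_basept : ¬ SUp basept := by
  rintro (h | ⟨-, x, hx, hpos⟩)
  · exact absurd h (by norm_num [basept])
  · rw [show basept.2 = some (0:ℝ) from rfl] at hx
    cases hx
    exact lt_irrefl _ hpos

lemma Gfun_basept : Gfun basept = basept := by
  show Gfun (0, some 0) = (0, some 0)
  rw [Gfun_lt _ (by norm_num : (0:ℝ) < 1)]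
  norm_num

lemma Gfuninv_basept : Gfuninv basept = basept := by
  show Gfuninv (0, some 0) = (0, some 0)
  rw [Gfuninv_gt _ (by norm_num : (-1:ℝ) < 0)]
  norm_num

lemma Ffun_basept : SUp (Ffun basept) := by
  show SUp (0, some (0 + 1))
  exact Or.inr ⟨rfl, 0 + 1, rfl, by norm_num⟩

/-- The key induction: a valid `σ₁⁻¹`-free word moves the basepoint strictly up
if it contains `σ₁`, and fixes it otherwise. -/
lemma key_induction (w : List (ℕ × Bool)) (hw : ValidWord3 w) (hA' : A' ∉ w) :
    (A ∈ w → SUp (braidAct (evalWord 3 w) basept)) ∧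
    (A ∉ w → braidAct (evalWord 3 w) basept = basept) := by
  induction w with
  | nil =>
    constructor
    · intro h; exact absurd h (List.not_mem_nil (a := A))
    · intro _
      rw [show evalWord 3 [] = 1 from rfl, map_one]
      rfl
  | cons p t ih =>
    have hpt : p.1 < 2 := hw p (List.mem_cons_self (a := p) (l := t))
    have hwt : ValidWord3 t := fun l hl => hw l (List.mem_cons_of_mem _ hl)
    have hA't : A' ∉ t := fun h => hA' (List.mem_cons_of_mem _ h)
    obtain ⟨iht, ihc⟩ := ih hwt hA't
    have heval : evalWord 3 (p :: t)
        = (if p.2 then braidGen 3 p.1 else (braidGen 3 p.1)⁻¹) * evalWord 3 t := by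
      simp [evalWord]
    obtain ⟨i, b⟩ := p
    have hb : braidAct (evalWord 3 ((i, b) :: t)) basept
        = braidAct (if b then braidGen 3 i else (braidGen 3 i)⁻¹)
            (braidAct (evalWord 3 t) basept) := by
      rw [heval, map_mul]
      rfl
    interval_cases i
    · -- i = 0
      cases b
      · -- letter A' : excluded
        exact absurd List.mem_cons_self hA'
      · -- letter A
        constructor
        · intro _
          rw [hb]
          simp only [if_true, braidAct_gen0]
          by_cases hAt : A ∈ t
          · exact SUp_F (iht hAt)
          · rw [ihc hAt]
            exact Ffun_basept
        · intro h
          exact absurd (List.mem_cons_self (a := A) (l := t)) h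
    · -- i = 1
      have hAmem : A ∈ (1, b) :: t ↔ A ∈ t := by
        constructor
        · intro h
          rcases List.mem_cons.1 h with h | h
          · exact absurd h (by simp [A])
          · exact h
        · exact fun h => List.mem_cons_of_mem _ h
      cases b
      · -- letter B'
        constructor
        · intro hmem
          rw [hb]
          rw [if_neg (by simp : ¬ (false = true))]
          simp only [map_inv, braidAct_gen1]
          exact SUp_Ginv (iht (hAmem.1 hmem))
        · intro hmem
          rw [hb]
          rw [if_neg (by simp : ¬ (false = true))]
          simp only [map_inv, braidAct_gen1]
          rw [ihc fun h => hmem (List.mem_cons_of_mem _ h)]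
          exact Gfuninv_basept
      · -- letter B
        constructor
        · intro hmem
          rw [hb]
          simp only [if_true, braidAct_gen1]
          exact SUp_G (iht (hAmem.1 hmem))
        · intro hmem
          rw [hb]
          simp only [if_true, braidAct_gen1]
          rw [ihc fun h => hmem (List.mem_cons_of_mem _ h)]
          exact Gfun_basept

theorem stmt10 (w : List (ℕ × Bool)) (hw : ValidWord3 w) (hA : A ∈ w) (hA' : A' ∉ w) :
    evalWord 3 w ≠ 1 := by
  intro h1
  have hS := (key_induction w hw hA').1 hA
  rw [h1, map_one] at hS
  exact not_SUp_basept hS
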